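/- Let (X,d,W) be a UCW-hyperbolic space with monotone modulus of uniform convexity η, C ⊆ X a nonempty convex subset, T : C → C nonexpansive, (λ_n),(s_n) sequences in [0,1], (x_n) the Ishikawa iteration starting with x ∈ C, y_n := (1−s_n)x_n ⊕ s_n T x_n, and p a fixed point of T. Let n ∈ ℕ and γ, β, β̃, a > 0 satisfy γ ≤ d(x_n,p), d(x_n,p) ≤ β, d(x_n,p) ≤ β̃ and a ≤ d(x_n, Ty_n). Then d(x_{n+1}, p) ≤ d(x_n, p) − 2γλ_n(1−λ_n)·η(β̃, a/β). -/
import Mathlib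


open Set Filter Metric Bornology Function

/-- A `W`-hyperbolic space structure on a metric space `X` (Kohlenbach).
`W x y l` denotes `(1-l)x ⊕ l y`. -/
structure WHyp (X : Type*) [MetricSpace X] where
  W : X → X → ℝ → X
  W1 : ∀ (x y z : X), ∀ l ∈ Set.Icc (0:ℝ) 1,
    dist z (W x y l) ≤ (1 - l) * dist z x + l * dist z y
  W2 : ∀ (x y : X), ∀ l ∈ Set.Icc (0:ℝ) 1, ∀ l' ∈ Set.Icc (0:ℝ) 1,
    dist (W x y l) (W x y l') = |l - l'| * dist x y
  W3 : ∀ (x y : X), ∀ l ∈ Set.Icc (0:ℝ) 1, W x y l = W y x (1 - l)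
  W4 : ∀ (x y z w : X), ∀ l ∈ Set.Icc (0:ℝ) 1,
    dist (W x z l) (W y w l) ≤ (1 - l) * dist x y + l * dist z w

/-- `η` is a modulus of uniform convexity for the `W`-hyperbolic space `H`. -/
def WHyp.UnifConvex {X : Type*} [MetricSpace X] (H : WHyp X) (η : ℝ → ℝ → ℝ) : Prop :=
  (∀ r ε : ℝ, 0 < r → ε ∈ Set.Ioc (0:ℝ) 2 → η r ε ∈ Set.Ioc (0:ℝ) 1) ∧
  (∀ (r ε : ℝ) (a x y : X), 0 < r → ε ∈ Set.Ioc (0:ℝ) 2 →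
    dist x a ≤ r → dist y a ≤ r → ε * r ≤ dist x y →
    dist (H.W x y (1/2)) a ≤ (1 - η r ε) * r)

/-- A modulus of uniform convexity is monotone if it decreases in `r` for fixed `ε`. -/
def MonotoneModulus (η : ℝ → ℝ → ℝ) : Prop :=
  ∀ r s ε : ℝ, 0 < r → r ≤ s → ε ∈ Set.Ioc (0:ℝ) 2 → η s ε ≤ η r ε

/-- A subset `C` is convex in the `W`-hyperbolic space `H`. -/
def WHyp.ConvexSet {X : Type*} [MetricSpace X] (H : WHyp X) (C : Set X) : Prop :=
  ∀ x ∈ C, ∀ y ∈ C, ∀ l ∈ Set.Icc (0:ℝ) 1, H.W x y l ∈ C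

/-- The Ishikawa iteration: `x₀ = x`,
`x_{n+1} = (1-λ_n)x_n ⊕ λ_n T((1-s_n)x_n ⊕ s_n T x_n)`. -/
def WHyp.ishSeq {X : Type*} [MetricSpace X] (H : WHyp X) (T : X → X) (l s : ℕ → ℝ)
    (x : X) : ℕ → X
  | 0 => x
  | n + 1 =>
      H.W (H.ishSeq T l s x n)
        (T (H.W (H.ishSeq T l s x n) (T (H.ishSeq T l s x n)) (s n))) (l n)


section Aux

variable {X : Type*} [MetricSpace X] (H : WHyp X)

lemma WHyp.W_zero (x y : X) : H.W x y 0 = x := by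
  have h := H.W1 x y x 0 (by constructor <;> norm_num)
  simp at h
  exact h.symm

lemma WHyp.W_one (x y : X) : H.W x y 1 = y := by
  rw [H.W3 x y 1 (by constructor <;> norm_num)]
  simpa using H.W_zero y x

lemma WHyp.dist_left (x y : X) {l : ℝ} (hl : l ∈ Set.Icc (0:ℝ) 1) :
    dist x (H.W x y l) = l * dist x y := by
  have h := H.W2 x y l hl 0 (by constructor <;> norm_num)
  rw [H.W_zero, sub_zero, abs_of_nonneg hl.1] at h
  rw [dist_comm]; exact h

lemma WHyp.dist_right (x y : X) {l : ℝ} (hl : l ∈ Set.Icc (0:ℝ) 1) :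
    dist (H.W x y l) y = (1 - l) * dist x y := by
  have h := H.W2 x y l hl 1 (by constructor <;> norm_num)
  rw [H.W_one, abs_of_nonpos (by linarith [hl.2] : l - 1 ≤ 0)] at h
  rw [h]; ring

/-- In a uniformly convex W-hyperbolic space, metric betweenness points are unique. -/
lemma WHyp.uniq {eta : ℝ → ℝ → ℝ} (hU : H.UnifConvex eta) (x y z u : X)
    (h1 : dist x z = dist x u) (h2 : dist z y = dist u y)
    (h3 : dist x z + dist z y = dist x y) : z = u := by
  by_contra hne
  have hd : 0 < dist z u := dist_pos.mpr hne
  rcases eq_or_lt_of_le (dist_nonneg : (0:ℝ) ≤ dist x z) with hc10 | hc1pos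
  · have hxz0 : dist x z = 0 := hc10.symm
    have hxu0 : dist x u = 0 := by rw [← h1]; exact hxz0
    exact hne ((dist_eq_zero.mp hxz0).symm.trans (dist_eq_zero.mp hxu0))
  rcases eq_or_lt_of_le (dist_nonneg : (0:ℝ) ≤ dist z y) with hc20 | hc2pos
  · have hzy0 : dist z y = 0 := hc20.symm
    have huy0 : dist u y = 0 := by rw [← h2]; exact hzy0
    exact hne ((dist_eq_zero.mp hzy0).trans (dist_eq_zero.mp huy0).symm)
  have hd2c1 : dist z u ≤ 2 * dist x z := by
    have := dist_triangle z x u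
    rw [dist_comm z x, ← h1] at this
    linarith
  have hd2c2 : dist z u ≤ 2 * dist z y := by
    have := dist_triangle z y u
    rw [dist_comm y u, ← h2] at this
    linarith
  have he1 : dist z u / dist x z ∈ Set.Ioc (0:ℝ) 2 :=
    ⟨div_pos hd hc1pos, (div_le_iff₀ hc1pos).mpr (by linarith)⟩
  have he2 : dist z u / dist z y ∈ Set.Ioc (0:ℝ) 2 :=
    ⟨div_pos hd hc2pos, (div_le_iff₀ hc2pos).mpr (by linarith)⟩
  have hw1 := hU.2 (dist x z) (dist z u / dist x z) x z u hc1pos he1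
    (le_of_eq (dist_comm z x))
    (by rw [dist_comm u x, ← h1])
    (le_of_eq (div_mul_cancel₀ _ (ne_of_gt hc1pos)))
  have hw2 := hU.2 (dist z y) (dist z u / dist z y) y z u hc2pos he2
    (le_refl _) (le_of_eq h2.symm)
    (le_of_eq (div_mul_cancel₀ _ (ne_of_gt hc2pos)))
  have heta1 : 0 < eta (dist x z) (dist z u / dist x z) :=
    (hU.1 _ _ hc1pos he1).1
  have heta2 : 0 < eta (dist z y) (dist z u / dist z y) :=
    (hU.1 _ _ hc2pos he2).1
  have hlt1 : dist (H.W z u (1/2)) x < dist x z := lt_of_le_of_lt hw1 (by nlinarith)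
  have hlt2 : dist (H.W z u (1/2)) y < dist z y := lt_of_le_of_lt hw2 (by nlinarith)
  have htri := dist_triangle x (H.W z u (1/2)) y
  rw [dist_comm x (H.W z u (1/2))] at htri
  linarith

/-- Segment identity: for `0 ≤ λ ≤ 1/2`, `(1-2λ)x ⊕ 2λ m = (1-λ)x ⊕ λy`, `m` the midpoint. -/
lemma WHyp.seg {eta : ℝ → ℝ → ℝ} (hU : H.UnifConvex eta) (x y : X) {lam : ℝ}
    (h0 : 0 ≤ lam) (h12 : lam ≤ 1/2) :
    H.W x (H.W x y (1/2)) (2 * lam) = H.W x y lam := by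
  have h2l : (2 * lam) ∈ Set.Icc (0:ℝ) 1 := ⟨by linarith, by linarith⟩
  have hlmem : lam ∈ Set.Icc (0:ℝ) 1 := ⟨h0, by linarith⟩
  have hhalf : (1/2 : ℝ) ∈ Set.Icc (0:ℝ) 1 := by constructor <;> norm_num
  have hxm : dist x (H.W x y (1/2)) = (1/2) * dist x y := H.dist_left x y hhalf
  have hmy : dist (H.W x y (1/2)) y = (1/2) * dist x y := by
    rw [H.dist_right x y hhalf]; ring_nf
  have hxz : dist x (H.W x (H.W x y (1/2)) (2 * lam)) = lam * dist x y := by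
    rw [H.dist_left x (H.W x y (1/2)) h2l, hxm]; ring
  have hzm : dist (H.W x (H.W x y (1/2)) (2 * lam)) (H.W x y (1/2))
      = (1 - 2 * lam) * ((1/2) * dist x y) := by
    rw [H.dist_right x (H.W x y (1/2)) h2l, hxm]
  have hzy_le : dist (H.W x (H.W x y (1/2)) (2 * lam)) y ≤ (1 - lam) * dist x y := by
    calc dist (H.W x (H.W x y (1/2)) (2 * lam)) y
        ≤ dist (H.W x (H.W x y (1/2)) (2 * lam)) (H.W x y (1/2)) + dist (H.W x y (1/2)) y :=
          dist_triangle _ _ _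
      _ = (1 - 2*lam) * ((1/2) * dist x y) + (1/2) * dist x y := by rw [hzm, hmy]
      _ = (1 - lam) * dist x y := by ring
  have hzy_ge : (1 - lam) * dist x y ≤ dist (H.W x (H.W x y (1/2)) (2 * lam)) y := by
    have htri := dist_triangle x (H.W x (H.W x y (1/2)) (2 * lam)) y
    nlinarith [htri, hxz]
  have hzy : dist (H.W x (H.W x y (1/2)) (2 * lam)) y = (1 - lam) * dist x y :=
    le_antisymm hzy_le hzy_ge
  have hxu : dist x (H.W x y lam) = lam * dist x y := H.dist_left x y hlmem
  have huy : dist (H.W x y lam) y = (1 - lam) * dist x y := H.dist_right x y hlmem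
  exact H.uniq hU x y _ (H.W x y lam) (by rw [hxz, hxu]) (by rw [hzy, huy])
    (by rw [hxz, hzy]; ring)

/-- Half case of the convexity lemma. -/
lemma WHyp.conv_half {eta : ℝ → ℝ → ℝ} (hU : H.UnifConvex eta) (r ep : ℝ) (a x y : X)
    (hr : 0 < r) (he : ep ∈ Set.Ioc (0:ℝ) 2) (hxa : dist x a ≤ r) (hya : dist y a ≤ r)
    (hxy : ep * r ≤ dist x y) {lam : ℝ} (h0 : 0 ≤ lam) (h12 : lam ≤ 1/2) :
    dist (H.W x y lam) a ≤ (1 - 2 * lam * eta r ep) * r := by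
  rw [← H.seg hU x y h0 h12]
  have hmid : dist (H.W x y (1/2)) a ≤ (1 - eta r ep) * r := hU.2 r ep a x y hr he hxa hya hxy
  have h2l : (2 * lam) ∈ Set.Icc (0:ℝ) 1 := ⟨by linarith, by linarith⟩
  have hW1 := H.W1 x (H.W x y (1/2)) a (2 * lam) h2l
  rw [dist_comm]
  calc dist a (H.W x (H.W x y (1/2)) (2 * lam))
      ≤ (1 - 2*lam) * dist a x + 2*lam * dist a (H.W x y (1/2)) := hW1
    _ ≤ (1 - 2*lam) * r + 2*lam * ((1 - eta r ep) * r) := by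
        have e1 : dist a x ≤ r := by rw [dist_comm]; exact hxa
        have e2 : dist a (H.W x y (1/2)) ≤ (1 - eta r ep) * r := by
          rw [dist_comm]; exact hmid
        have c1 : (0:ℝ) ≤ 1 - 2*lam := by linarith
        have c2 : (0:ℝ) ≤ 2*lam := by linarith
        nlinarith [mul_le_mul_of_nonneg_left e1 c1, mul_le_mul_of_nonneg_left e2 c2]
    _ = (1 - 2 * lam * eta r ep) * r := by ring

/-- Convexity lemma (Leuştean): `d((1-λ)x ⊕ λ y, a) ≤ (1 - 2λ(1-λ)η(r,ε))r`. -/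
lemma WHyp.conv {eta : ℝ → ℝ → ℝ} (hU : H.UnifConvex eta) (r ep : ℝ) (a x y : X)
    (hr : 0 < r) (he : ep ∈ Set.Ioc (0:ℝ) 2) (hxa : dist x a ≤ r) (hya : dist y a ≤ r)
    (hxy : ep * r ≤ dist x y) {lam : ℝ} (hlmem : lam ∈ Set.Icc (0:ℝ) 1) :
    dist (H.W x y lam) a ≤ (1 - 2 * lam * (1 - lam) * eta r ep) * r := by
  have heta : 0 < eta r ep := (hU.1 r ep hr he).1
  rcases le_or_gt lam (1/2) with h12 | h12
  · have hh := H.conv_half hU r ep a x y hr he hxa hya hxy hlmem.1 h12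
    calc dist (H.W x y lam) a ≤ (1 - 2 * lam * eta r ep) * r := hh
      _ ≤ (1 - 2 * lam * (1 - lam) * eta r ep) * r := by
          nlinarith [mul_nonneg (mul_nonneg (mul_nonneg hlmem.1 hlmem.1) heta.le) hr.le]
  · rw [H.W3 x y lam hlmem]
    have hyx : ep * r ≤ dist y x := by rw [dist_comm]; exact hxy
    have hh := H.conv_half hU r ep a y x hr he hya hxa hyx (lam := 1 - lam)
      (by linarith [hlmem.2]) (by linarith)
    have hnn : (0:ℝ) ≤ (1 - lam) * (1 - lam) * eta r ep * r :=
      mul_nonneg (mul_nonneg (mul_nonneg (by linarith [hlmem.2]) (by linarith [hlmem.2])) heta.le) hr.le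
    calc dist (H.W y x (1 - lam)) a ≤ (1 - 2 * (1 - lam) * eta r ep) * r := hh
      _ ≤ (1 - 2 * lam * (1 - lam) * eta r ep) * r := by nlinarith [hnn]

end Aux

theorem stmt14 {X : Type*} [MetricSpace X] (H : WHyp X)
    (η : ℝ → ℝ → ℝ) (hU : H.UnifConvex η) (hmon : MonotoneModulus η)
    (C : Set X) (hCne : C.Nonempty) (hCconv : H.ConvexSet C)
    (T : X → X) (hT : Set.MapsTo T C C)
    (hTne : ∀ x ∈ C, ∀ y ∈ C, dist (T x) (T y) ≤ dist x y)
    (l s : ℕ → ℝ) (hl : ∀ n, l n ∈ Set.Icc (0:ℝ) 1) (hs : ∀ n, s n ∈ Set.Icc (0:ℝ) 1)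
    (x : X) (hx : x ∈ C)
    (xs : ℕ → X) (hxs : xs = H.ishSeq T l s x)
    (ys : ℕ → X) (hys : ∀ n, ys n = H.W (xs n) (T (xs n)) (s n))
    (p : X) (hp : p ∈ C) (hfix : T p = p)
    (n : ℕ) (γ β βt a : ℝ) (hγ : 0 < γ) (hβ : 0 < β) (hβt : 0 < βt) (ha : 0 < a)
    (h1 : γ ≤ dist (xs n) p) (h2 : dist (xs n) p ≤ β) (h3 : dist (xs n) p ≤ βt)
    (h4 : a ≤ dist (xs n) (T (ys n))) :
    dist (xs (n + 1)) p ≤ dist (xs n) p - 2 * γ * l n * (1 - l n) * η βt (a / β) := by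
  have hmem : ∀ m, xs m ∈ C := by
    intro m
    rw [hxs]
    induction m with
    | zero => exact hx
    | succ k ih =>
        simp only [WHyp.ishSeq]
        exact hCconv _ ih _ (hT (hCconv _ ih _ (hT ih) _ (hs k))) _ (hl k)
  have hrpos : 0 < dist (xs n) p := lt_of_lt_of_le hγ h1
  have hxnC : xs n ∈ C := hmem n
  have hTxC : T (xs n) ∈ C := hT hxnC
  have hyC : ys n ∈ C := by rw [hys n]; exact hCconv _ hxnC _ hTxC _ (hs n)
  have e : dist p (T (xs n)) ≤ dist p (xs n) := by
    rw [dist_comm p (T (xs n)), dist_comm p (xs n)]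
    calc dist (T (xs n)) p = dist (T (xs n)) (T p) := by rw [hfix]
      _ ≤ dist (xs n) p := hTne _ hxnC _ hp
  have hyp : dist (ys n) p ≤ dist (xs n) p := by
    rw [hys n, dist_comm, dist_comm (xs n) p]
    have h := H.W1 (xs n) (T (xs n)) p (s n) (hs n)
    have hs0 := (hs n).1
    nlinarith [mul_le_mul_of_nonneg_left e hs0]
  have hTyp : dist (T (ys n)) p ≤ dist (xs n) p := by
    calc dist (T (ys n)) p = dist (T (ys n)) (T p) := by rw [hfix]
      _ ≤ dist (ys n) p := hTne _ hyC _ hp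
      _ ≤ dist (xs n) p := hyp
  have hemem : a / β ∈ Set.Ioc (0:ℝ) 2 := by
    constructor
    · exact div_pos ha hβ
    · rw [div_le_iff₀ hβ]
      have htri := dist_triangle (xs n) p (T (ys n))
      rw [dist_comm p (T (ys n))] at htri
      linarith
  have her : (a / β) * dist (xs n) p ≤ dist (xs n) (T (ys n)) := by
    have hh : (a / β) * dist (xs n) p ≤ (a / β) * β :=
      mul_le_mul_of_nonneg_left h2 (le_of_lt (div_pos ha hβ))
    rw [div_mul_cancel₀ _ (ne_of_gt hβ)] at hh
    linarith
  have hconv := H.conv hU (dist (xs n) p) (a/β) p (xs n) (T (ys n)) hrpos hemem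
    (le_refl _) hTyp her (hl n)
  have hstep : xs (n+1) = H.W (xs n) (T (ys n)) (l n) := by
    rw [hys n, hxs]
    simp only [WHyp.ishSeq]
  rw [hstep]
  have hmono := hmon (dist (xs n) p) βt (a/β) hrpos h3 hemem
  have heta0 : 0 < η βt (a/β) := (hU.1 βt (a/β) hβt hemem).1
  have hl0 := (hl n).1
  have hl1 := (hl n).2
  have key : γ * η βt (a/β) ≤ dist (xs n) p * η (dist (xs n) p) (a/β) :=
    mul_le_mul h1 hmono (le_of_lt heta0) dist_nonneg
  have hll : (0:ℝ) ≤ l n * (1 - l n) := mul_nonneg hl0 (by linarith)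
  nlinarith [hconv, mul_le_mul_of_nonneg_left key hll]
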